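/- Let s be a sequence whose events have pairwise distinct (strictly increasing) timestamps, and let H(s) be the serial episode having one node per event of s, each node carrying a single episode event with that sequence event's label, and a proper edge from the node of e to the node of f whenever ts(e) < ts(f). Then for every episode G: s covers G if and only if G ⪯ H(s). -/

import Mathlib

/-- A sequence event: a unique id, a label (from alphabet encoded as `ℕ`),
and an integer time stamp. -/
structure SeqEvent where
  id : ℕ
  lab : ℕ
  ts : ℤ
deriving DecidableEq

/-- An event sequence: a finite collection of sequence events with distinct ids,
whose time stamps are monotone in the ids. -/
structure EventSeq where
  events : Finset SeqEvent
  id_inj : ∀ e ∈ events, ∀ f ∈ events, e.id = f.id → e = f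
  ts_mono : ∀ e ∈ events, ∀ f ∈ events, e.id ≤ f.id → e.ts ≤ f.ts

/-- An episode: a finite set of episode events (identified by ids in `ℕ`) with labels,
a finite set of graph nodes, a map from events to nodes (surjectivity and the DAG
property are recorded in `Episode.WellFormed`), and weak and proper edges. -/
structure Episode where
  events : Finset ℕ
  lab : ℕ → ℕ
  nodes : Finset ℕ
  node : ℕ → ℕ
  weak : ℕ → ℕ → Prop
  proper : ℕ → ℕ → Prop

namespace Episode

/-- An edge of the episode graph (weak or proper). -/
def edge (G : Episode) (a b : ℕ) : Prop := G.weak a b ∨ G.proper a b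

/-- `G.Desc m n` : `n` is a descendant of `m`, i.e. there is a directed path from `m` to `n`. -/
def Desc (G : Episode) (m n : ℕ) : Prop := Relation.TransGen G.edge m n

/-- `G.PDesc m n` : `n` is a proper descendant of `m`, i.e. some directed path
from `m` to `n` contains a proper edge. -/
def PDesc (G : Episode) (m n : ℕ) : Prop :=
  ∃ a b, Relation.ReflTransGen G.edge m a ∧ G.proper a b ∧ Relation.ReflTransGen G.edge b n

/-- Well-formedness of an episode: events map into the nodes, every node carries an
event, edges run between nodes, the weak and proper edges are disjoint, and the
graph is acyclic (a DAG). -/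
structure WellFormed (G : Episode) : Prop where
  node_mem : ∀ e ∈ G.events, G.node e ∈ G.nodes
  node_surj : ∀ n ∈ G.nodes, ∃ e ∈ G.events, G.node e = n
  weak_mem : ∀ a b, G.weak a b → a ∈ G.nodes ∧ b ∈ G.nodes
  proper_mem : ∀ a b, G.proper a b → a ∈ G.nodes ∧ b ∈ G.nodes
  weak_proper_disjoint : ∀ a b, G.weak a b → G.proper a b → False
  acyclic : ∀ n, ¬ G.Desc n n

/-- The transitive closure of an episode: add an edge from every node to each of its
descendants, proper if the descendant is a proper descendant, weak otherwise. -/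
def tcl (G : Episode) : Episode :=
  { G with
    proper := fun a b => G.PDesc a b
    weak := fun a b => G.Desc a b ∧ ¬ G.PDesc a b }

/-- An episode is transitively closed if it coincides with its transitive closure. -/
def TransClosed (G : Episode) : Prop :=
  (∀ a b, G.proper a b ↔ G.PDesc a b) ∧
  (∀ a b, G.weak a b ↔ (G.Desc a b ∧ ¬ G.PDesc a b))

end Episode

/-- `m` is a coverage mapping of episode `G` into sequence `s`: an injective map from
the episode events into the sequence events preserving labels, mapping events of one
node to a common time stamp, and respecting weak and proper edges. -/
def IsCoverMap (s : EventSeq) (G : Episode) (m : ℕ → SeqEvent) : Prop :=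
  (∀ e ∈ G.events, m e ∈ s.events) ∧
  Set.InjOn m ↑G.events ∧
  (∀ e ∈ G.events, (m e).lab = G.lab e) ∧
  (∀ e ∈ G.events, ∀ f ∈ G.events, G.node e = G.node f → (m e).ts = (m f).ts) ∧
  (∀ e ∈ G.events, ∀ f ∈ G.events, G.Desc (G.node f) (G.node e) → (m f).ts ≤ (m e).ts) ∧
  (∀ e ∈ G.events, ∀ f ∈ G.events, G.PDesc (G.node f) (G.node e) → (m f).ts < (m e).ts)

/-- A sequence `s` covers an episode `G`. -/
def Covers (s : EventSeq) (G : Episode) : Prop := ∃ m, IsCoverMap s G m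

/-- `G ⪯ H` : every sequence covering `H` also covers `G`. -/
def Subepisode (G H : Episode) : Prop := ∀ s : EventSeq, Covers s H → Covers s G

/-- `G ∼ H` : `G ⪯ H` and `H ⪯ G`. -/
def EpisodeSimilar (G H : Episode) : Prop := Subepisode G H ∧ Subepisode H G

/-- The window `s[i, j]`: the subsequence of events with time stamps in `[i, j]`. -/
def EventSeq.window (s : EventSeq) (i j : ℤ) : EventSeq where
  events := s.events.filter (fun e => i ≤ e.ts ∧ e.ts ≤ j)
  id_inj := fun e he f hf h =>
    s.id_inj e (Finset.mem_filter.mp he).1 f (Finset.mem_filter.mp hf).1 h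
  ts_mono := fun e he f hf h =>
    s.ts_mono e (Finset.mem_filter.mp he).1 f (Finset.mem_filter.mp hf).1 h

/-- The support `fr(G; s)` with window size `ρ`: the number of integers `t` such that
the window `s[t, t + ρ - 1]` covers `G` (as an extended natural number). -/
noncomputable def support (ρ : ℤ) (s : EventSeq) (G : Episode) : ℕ∞ :=
  {t : ℤ | Covers (s.window t (t + ρ - 1)) G}.encard

/-- `first(i)` : the smallest time stamp in the range of the instance. -/
noncomputable def instFirst (G : Episode) (m : ℕ → SeqEvent) : ℤ :=
  sInf ((fun e => (m e).ts) '' ↑G.events)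

/-- `last(i)` : the largest time stamp in the range of the instance. -/
noncomputable def instLast (G : Episode) (m : ℕ → SeqEvent) : ℤ :=
  sSup ((fun e => (m e).ts) '' ↑G.events)

/-- `m` is an instance of `G` in `s` (with window size `ρ`): a coverage mapping of `G`
into `s` such that no used sequence event can be replaced by an unused one with the same
label, the same time stamp and a smaller id, and whose span is less than `ρ`. -/
def IsInstance (ρ : ℤ) (s : EventSeq) (G : Episode) (m : ℕ → SeqEvent) : Prop :=
  IsCoverMap s G m ∧
  (∀ e ∈ G.events, ∀ f ∈ s.events, (∀ e' ∈ G.events, m e' ≠ f) →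
      f.lab = (m e).lab → f.ts = (m e).ts → ¬ f.id < (m e).id) ∧
  instLast G m - instFirst G m ≤ ρ - 1

/-- let `s` be a sequence with pairwise distinct time stamps and let `H`
be the serial episode `H(s)` having one node per event of `s` (identified via the
bijection `φ`), each node carrying a single episode event with the corresponding label,
and a proper edge between two nodes exactly when the time stamp of the first event is
smaller. Then for every episode `G`: `s` covers `G` iff `G ⪯ H`. -/
theorem covers_iff_subepisode_serial (s : EventSeq)
    (hdist : ∀ e ∈ s.events, ∀ f ∈ s.events, e.ts = f.ts → e = f)
    (H : Episode) (φ : ℕ → SeqEvent)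
    (hmaps : ∀ e ∈ H.events, φ e ∈ s.events)
    (hinj : Set.InjOn φ ↑H.events)
    (hsurj : ∀ f ∈ s.events, ∃ e ∈ H.events, φ e = f)
    (hlab : ∀ e ∈ H.events, (φ e).lab = H.lab e)
    (hnodes : H.nodes = H.events)
    (hnode : ∀ e ∈ H.events, H.node e = e)
    (hproper : ∀ a b, H.proper a b ↔
      (a ∈ H.events ∧ b ∈ H.events ∧ (φ a).ts < (φ b).ts))
    (hweak : ∀ a b, ¬ H.weak a b)
    (G : Episode) (hG : G.WellFormed) :
    Covers s G ↔ Subepisode G H := by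
  have hedge : ∀ a b, H.edge a b → a ∈ H.events ∧ b ∈ H.events ∧ (φ a).ts < (φ b).ts := by
    intro a b hab
    rcases hab with h | h
    · exact absurd h (hweak a b)
    · exact (hproper a b).mp h
  have hdesc : ∀ a b, H.Desc a b → (φ a).ts < (φ b).ts := by
    intro a b h
    induction h with
    | single h => exact (hedge _ _ h).2.2
    | tail _ h ih => exact ih.trans (hedge _ _ h).2.2
  have hrt : ∀ a b, Relation.ReflTransGen H.edge a b → (φ a).ts ≤ (φ b).ts := by
    intro a b h
    induction h with
    | refl => exact le_rfl
    | tail _ h ih => exact ih.trans (hedge _ _ h).2.2.le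
  have hpd : ∀ a b, H.PDesc a b → (φ a).ts < (φ b).ts := by
    rintro a b ⟨x, y, h1, h2, h3⟩
    exact lt_of_le_of_lt (hrt _ _ h1)
      (lt_of_lt_of_le ((hproper x y).mp h2).2.2 (hrt _ _ h3))
  constructor
  · rintro ⟨m, hm1, hm2, hm3, hm4, hm5, hm6⟩
    rintro t ⟨k, hk1, hk2, hk3, hk4, hk5, hk6⟩
    have hψ0 : ∀ e, ∃ e', e ∈ G.events → e' ∈ H.events ∧ φ e' = m e := by
      intro e
      by_cases he : e ∈ G.events
      · obtain ⟨e', he', heq⟩ := hsurj (m e) (hm1 e he)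
        exact ⟨e', fun _ => ⟨he', heq⟩⟩
      · exact ⟨0, fun h => absurd h he⟩
    choose ψ hψ using hψ0
    -- for e f ∈ G.events with (m f).ts < (m e).ts, H has a proper descendant relation
    have key : ∀ e ∈ G.events, ∀ f ∈ G.events, (m f).ts < (m e).ts →
        H.PDesc (H.node (ψ f)) (H.node (ψ e)) := by
      intro e he f hf hlt
      have hψe := hψ e he
      have hψf := hψ f hf
      rw [hnode _ hψe.1, hnode _ hψf.1]
      refine ⟨ψ f, ψ e, Relation.ReflTransGen.refl, ?_, Relation.ReflTransGen.refl⟩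
      rw [hproper]
      refine ⟨hψf.1, hψe.1, ?_⟩
      rw [hψe.2, hψf.2]; exact hlt
    have keyeq : ∀ e ∈ G.events, ∀ f ∈ G.events, (m f).ts = (m e).ts → ψ f = ψ e := by
      intro e he f hf heq
      have hψe := hψ e he
      have hψf := hψ f hf
      have : m f = m e := hdist _ (hm1 f hf) _ (hm1 e he) heq
      exact hinj hψf.1 hψe.1 (by rw [hψf.2, hψe.2, this])
    refine ⟨fun e => k (ψ e), ?_, ?_, ?_, ?_, ?_, ?_⟩
    · intro e he; exact hk1 _ (hψ e he).1
    · intro e he f hf h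
      have hψe := hψ e he
      have hψf := hψ f hf
      have : ψ e = ψ f := hk2 hψe.1 hψf.1 h
      exact hm2 he hf (by rw [← hψe.2, ← hψf.2, this])
    · intro e he
      have hψe := hψ e he
      rw [hk3 _ hψe.1, ← hlab _ hψe.1, hψe.2, hm3 e he]
    · intro e he f hf hn
      have := hm4 e he f hf hn
      show (k (ψ e)).ts = (k (ψ f)).ts
      rw [keyeq e he f hf this.symm]
    · intro e he f hf hd
      rcases lt_or_eq_of_le (hm5 e he f hf hd) with hlt | heq
      · exact (hk6 _ (hψ e he).1 _ (hψ f hf).1 (key e he f hf hlt)).le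
      · show (k (ψ f)).ts ≤ (k (ψ e)).ts
        rw [keyeq e he f hf heq]
    · intro e he f hf hd
      exact hk6 _ (hψ e he).1 _ (hψ f hf).1 (key e he f hf (hm6 e he f hf hd))
  · intro hsub
    apply hsub
    refine ⟨φ, hmaps, hinj, hlab, ?_, ?_, ?_⟩
    · intro e he f hf hn
      rw [hnode e he, hnode f hf] at hn
      rw [hn]
    · intro e he f hf hd
      rw [hnode e he, hnode f hf] at hd
      exact (hdesc _ _ hd).le
    · intro e he f hf hd
      rw [hnode e he, hnode f hf] at hd
      exact hpd _ _ hd
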